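/- Let U ⊆ A^{ℤ²} be an additive shift space that is block gluing with gap M ≥ 1, and let Ω = {Ω(n)}_{n≥1} be an expanding system of finite subsets of ℤ². Then for all k,l ≥ M+1 and all n ≥ 1, Γ(Ω(n),U) ≥ Γ(Ω_{k,l}(n),U) ≥ (Γ_{(k−M)×(l−M)}(U))^{α_{k,l}(n)}, where α_{k,l}(n) is the number of grid rectangles Z_{k×l}((ak,bl)) contained in Ω(n) and Ω_{k,l}(n) is their union. -/

import Mathlib

open Filter
open scoped Classical

/-- The `m × n` rectangular lattice `Z_{m×n}(p)` with bottom-left corner `p`. -/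
def Zrect (m n : ℕ) (p : ℤ × ℤ) : Finset (ℤ × ℤ) :=
  (Finset.range m ×ˢ Finset.range n).image (fun ab => (p.1 + (ab.1 : ℤ), p.2 + (ab.2 : ℤ)))

/-- The number of patterns of `U` seen on the finite window `L`. -/
noncomputable def patternCount {A : Type*} (U : Set ((ℤ × ℤ) → A)) (L : Finset (ℤ × ℤ)) : ℕ :=
  Set.ncard ((fun x => fun p : L => x (p : ℤ × ℤ)) '' U)

/-- An additive shift space: nonempty, closed, translation invariant. -/
def IsShiftSpace {A : Type*} [TopologicalSpace A] (U : Set ((ℤ × ℤ) → A)) : Prop :=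
  U.Nonempty ∧ IsClosed U ∧ ∀ v : ℤ × ℤ, ∀ x ∈ U, (fun p => x (p + v)) ∈ U

/-- An expanding system of finite sublattices of `ℤ²`. -/
def IsExpandingSystem (Ω : ℕ → Finset (ℤ × ℤ)) : Prop :=
  (∀ n, Ω n ⊂ Ω (n + 1)) ∧ ∀ p : ℤ × ℤ, ∃ n, p ∈ Ω n

/-- The interior of a finite lattice. -/
def latInterior (L : Finset (ℤ × ℤ)) : Finset (ℤ × ℤ) :=
  L.filter (fun p => (p.1 + 1, p.2) ∈ L ∧ (p.1, p.2 + 1) ∈ L ∧ (p.1 + 1, p.2 + 1) ∈ L)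

/-- The boundary of a finite lattice. -/
def latBoundary (L : Finset (ℤ × ℤ)) : Finset (ℤ × ℤ) := L \ latInterior L

/-- The rectangular entropy `h_r(U)`. -/
noncomputable def rectEntropy {A : Type*} (U : Set ((ℤ × ℤ) → A)) : ℝ :=
  ⨅ mn : ℕ × ℕ, (1 / (((mn.1 + 1) * (mn.2 + 1) : ℕ) : ℝ)) *
    Real.log (patternCount U (Zrect (mn.1 + 1) (mn.2 + 1) (0, 0)))

/-- The entropy `h_Ω(U)` along an expanding system `Ω`. -/
noncomputable def entropyAlong {A : Type*} (U : Set ((ℤ × ℤ) → A)) (Ω : ℕ → Finset (ℤ × ℤ)) : ℝ :=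
  Filter.limsup (fun n => (1 / ((Ω n).card : ℝ)) * Real.log (patternCount U (Ω n))) Filter.atTop

/-- `Ω_{k,l}(n)`: the union of grid rectangles `Z_{k×l}((ak,bl))` contained in `L`. -/
noncomputable def gridPart (k l : ℕ) (L : Finset (ℤ × ℤ)) : Finset (ℤ × ℤ) :=
  L.filter (fun p => ∃ a b : ℤ,
    p ∈ Zrect k l ((k : ℤ) * a, (l : ℤ) * b) ∧ Zrect k l ((k : ℤ) * a, (l : ℤ) * b) ⊆ L)

/-- `β_{k,l}` : the size of the complement of the grid part. -/
noncomputable def betaKL (k l : ℕ) (L : Finset (ℤ × ℤ)) : ℕ := (L \ gridPart k l L).card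

/-- `α_{k,l}` : the number of grid rectangles contained in `L`. -/
noncomputable def alphaKL (k l : ℕ) (L : Finset (ℤ × ℤ)) : ℕ :=
  Set.ncard {ab : ℤ × ℤ | Zrect k l ((k : ℤ) * ab.1, (l : ℤ) * ab.2) ⊆ L}

/-- A tessellation of `ℤ²`. -/
def IsTessellation (T : Finset (ℤ × ℤ)) : Prop :=
  ∃ v : ℕ → ℤ × ℤ,
    (∀ i j : ℕ, i ≠ j → Disjoint (T.image (· + v i)) (T.image (· + v j))) ∧
    ∀ p : ℤ × ℤ, ∃ i : ℕ, p ∈ T.image (· + v i)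

/-- Euclidean distance between points of `ℤ²`. -/
noncomputable def euclDist (p q : ℤ × ℤ) : ℝ :=
  Real.sqrt (((p.1 - q.1 : ℤ) : ℝ) ^ 2 + ((p.2 - q.2 : ℤ) : ℝ) ^ 2)

/-- Block gluing with gap `M`. -/
def BlockGluingWithGap {A : Type*} (U : Set ((ℤ × ℤ) → A)) (M : ℕ) : Prop :=
  ∀ (m₁ n₁ m₂ n₂ : ℕ) (c₁ c₂ : ℤ × ℤ),
    (∀ p ∈ Zrect m₁ n₁ c₁, ∀ q ∈ Zrect m₂ n₂ c₂, (M : ℝ) ≤ euclDist p q) →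
    ∀ x₁ ∈ U, ∀ x₂ ∈ U, ∃ x ∈ U,
      (∀ p ∈ Zrect m₁ n₁ c₁, x p = x₁ p) ∧ ∀ q ∈ Zrect m₂ n₂ c₂, x q = x₂ q

/-- Block gluing. -/
def IsBlockGluing {A : Type*} (U : Set ((ℤ × ℤ) → A)) : Prop :=
  ∃ M : ℕ, 1 ≤ M ∧ BlockGluingWithGap U M

/-- A full shift on a sub-alphabet. -/
def IsFullShift {A : Type*} (U : Set ((ℤ × ℤ) → A)) : Prop :=
  ∃ B : Set A, U = {x | ∀ p : ℤ × ℤ, x p ∈ B}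

/-- Shift of finite type. -/
def IsSFT {A : Type*} (U : Set ((ℤ × ℤ) → A)) : Prop :=
  ∃ (F : Finset (ℤ × ℤ)) (P : Set (F → A)),
    U = {x | ∀ v : ℤ × ℤ, (fun p : F => x (v + (p : ℤ × ℤ))) ∈ P}

/-- `(i,j)` has horizontal length `m` in `L`. -/
def HasHorizLength (L : Finset (ℤ × ℤ)) (p : ℤ × ℤ) (m : ℕ) : Prop :=
  1 ≤ m ∧ (∃ c : ℤ × ℤ, p ∈ Zrect m 1 c ∧ Zrect m 1 c ⊆ L) ∧
    ∀ m' : ℕ, m < m' → ¬ ∃ c : ℤ × ℤ, p ∈ Zrect m' 1 c ∧ Zrect m' 1 c ⊆ L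

/-- `(i,j)` has vertical length `m` in `L`. -/
def HasVertLength (L : Finset (ℤ × ℤ)) (p : ℤ × ℤ) (m : ℕ) : Prop :=
  1 ≤ m ∧ (∃ c : ℤ × ℤ, p ∈ Zrect 1 m c ∧ Zrect 1 m c ⊆ L) ∧
    ∀ m' : ℕ, m < m' → ¬ ∃ c : ℤ × ℤ, p ∈ Zrect 1 m' c ∧ Zrect 1 m' c ⊆ L

noncomputable def betaHoriz (m : ℕ) (L : Finset (ℤ × ℤ)) : ℕ :=
  (L.filter (fun p => HasHorizLength L p m)).card

noncomputable def betaVert (m : ℕ) (L : Finset (ℤ × ℤ)) : ℕ :=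
  (L.filter (fun p => HasVertLength L p m)).card

/-- The one-dimensional sublattice segment `{s • v : 0 ≤ s ≤ n-1}`. -/
def lineSegment (v : ℤ × ℤ) (n : ℕ) : Finset (ℤ × ℤ) :=
  (Finset.range n).image (fun s : ℕ => ((s : ℤ) * v.1, (s : ℤ) * v.2))

/-- The projectional entropy along the one-dimensional sublattice generated by `v`. -/
noncomputable def projEntropy {A : Type*} (U : Set ((ℤ × ℤ) → A)) (v : ℤ × ℤ) : ℝ :=
  ⨅ n : ℕ, (1 / (n + 1 : ℝ)) * Real.log (patternCount U (lineSegment v (n + 1)))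

/-- `ĥ⁽¹⁾(U)`: supremum of projectional entropies over one-dimensional sublattices. -/
noncomputable def hHatOne {A : Type*} (U : Set ((ℤ × ℤ) → A)) : ℝ :=
  ⨆ v : {w : ℤ × ℤ // w ≠ 0}, projEntropy U (v : ℤ × ℤ)

/-- The horizontal golden-mean shift. -/
def goldenMeanShift : Set ((ℤ × ℤ) → Fin 2) :=
  {x | ∀ p : ℤ × ℤ, x p * x (p.1 + 1, p.2) = 0}

/-- The sequence `a_k`: `a_1 = 2`, `a_2 = 3`, `a_k = a_{k-1} + a_{k-2}`. -/
def aSeq : ℕ → ℕ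
  | 0 => 1
  | 1 => 2
  | (k + 2) => aSeq (k + 1) + aSeq k


lemma mem_Zrect {m n : ℕ} {c p : ℤ × ℤ} :
    p ∈ Zrect m n c ↔ c.1 ≤ p.1 ∧ p.1 < c.1 + m ∧ c.2 ≤ p.2 ∧ p.2 < c.2 + n := by
  simp only [Zrect, Finset.mem_image, Finset.mem_product, Finset.mem_range]
  constructor
  · rintro ⟨⟨a, b⟩, ⟨ha, hb⟩, rfl⟩
    simp only
    omega
  · rintro ⟨h1, h2, h3, h4⟩
    refine ⟨((p.1 - c.1).toNat, (p.2 - c.2).toNat), ⟨by omega, by omega⟩, ?_⟩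
    cases p
    simp only [Prod.mk.injEq]
    omega

def patternSet {A : Type*} (U : Set ((ℤ × ℤ) → A)) (L : Finset (ℤ × ℤ)) : Set (↥L → A) :=
  (fun x => fun p : L => x (p : ℤ × ℤ)) '' U

lemma patternCount_def {A : Type*} (U : Set ((ℤ × ℤ) → A)) (L : Finset (ℤ × ℤ)) :
    patternCount U L = (patternSet U L).ncard := rfl

lemma patternCount_mono {A : Type*} [Fintype A] (U : Set ((ℤ × ℤ) → A)) {L' L : Finset (ℤ × ℤ)}
    (h : L' ⊆ L) : patternCount U L' ≤ patternCount U L := by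
  have he : patternSet U L' = (fun f : ↥L → A => fun p : ↥L' => f ⟨(p : ℤ × ℤ), h p.2⟩) ''
      patternSet U L := by
    unfold patternSet
    rw [← Set.image_comp]
    rfl
  rw [patternCount_def, patternCount_def, he]
  exact Set.ncard_image_le (Set.toFinite _)

lemma patternCount_pos {A : Type*} [Fintype A] {U : Set ((ℤ × ℤ) → A)} (hUne : U.Nonempty)
    (L : Finset (ℤ × ℤ)) : 1 ≤ patternCount U L := by
  obtain ⟨x, hx⟩ := hUne
  rw [patternCount_def]
  exact (Set.ncard_pos (Set.toFinite _)).mpr ⟨_, x, hx, rfl⟩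

lemma patternCount_le_image_add {A : Type*} [Fintype A] {U : Set ((ℤ × ℤ) → A)}
    (hσ : ∀ v : ℤ × ℤ, ∀ x ∈ U, (fun p => x (p + v)) ∈ U) (L : Finset (ℤ × ℤ)) (v : ℤ × ℤ) :
    patternCount U L ≤ patternCount U (L.image (· + v)) := by
  classical
  set L2 := L.image (· + v) with hL2
  have hmem : ∀ p : ↥L, (p : ℤ × ℤ) + v ∈ L2 := fun p => Finset.mem_image_of_mem _ p.2
  set F : (↥L2 → A) → (↥L → A) := fun f p => f ⟨(p : ℤ × ℤ) + v, hmem p⟩ with hF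
  have hsub : patternSet U L ⊆ F '' patternSet U L2 := by
    rintro g ⟨x, hx, rfl⟩
    refine ⟨fun p : ↥L2 => x ((p : ℤ × ℤ) + -v), ⟨fun q => x (q + -v), hσ (-v) x hx, rfl⟩, ?_⟩
    funext p
    show x ((p : ℤ × ℤ) + v + -v) = x (p : ℤ × ℤ)
    rw [add_neg_cancel_right]
  calc patternCount U L = (patternSet U L).ncard := rfl
    _ ≤ (F '' patternSet U L2).ncard := Set.ncard_le_ncard hsub (Set.toFinite _)
    _ ≤ (patternSet U L2).ncard := Set.ncard_image_le (Set.toFinite _)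
    _ = patternCount U L2 := rfl

lemma Zrect_add (m n : ℕ) (c : ℤ × ℤ) : (Zrect m n (0, 0)).image (· + c) = Zrect m n c := by
  ext p
  simp only [Finset.mem_image]
  constructor
  · rintro ⟨q, hq, rfl⟩
    rw [mem_Zrect] at hq ⊢
    simp only [Prod.fst_add, Prod.snd_add] at *
    omega
  · intro hp
    rw [mem_Zrect] at hp
    refine ⟨p - c, by rw [mem_Zrect]; simp only [Prod.fst_sub, Prod.snd_sub]; omega, by simp⟩

lemma patternCount_base_le {A : Type*} [Fintype A] {U : Set ((ℤ × ℤ) → A)}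
    (hσ : ∀ v : ℤ × ℤ, ∀ x ∈ U, (fun p => x (p + v)) ∈ U) (m n : ℕ) (c : ℤ × ℤ) :
    patternCount U (Zrect m n (0, 0)) ≤ patternCount U (Zrect m n c) := by
  have := patternCount_le_image_add hσ (Zrect m n (0, 0)) c
  rwa [Zrect_add] at this

lemma euclDist_comm (p q : ℤ × ℤ) : euclDist p q = euclDist q p := by
  unfold euclDist
  push_cast
  ring_nf

lemma le_euclDist_fst {p q : ℤ × ℤ} {M : ℕ} (h : (M : ℤ) ≤ q.1 - p.1) :
    (M : ℝ) ≤ euclDist p q := by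
  unfold euclDist
  have h1 : (M : ℝ) ≤ |((p.1 - q.1 : ℤ) : ℝ)| := by
    push_cast
    rw [abs_sub_comm]
    have : (M : ℝ) ≤ (q.1 : ℝ) - p.1 := by exact_mod_cast h
    exact this.trans (le_abs_self _)
  calc (M : ℝ) ≤ |((p.1 - q.1 : ℤ) : ℝ)| := h1
    _ = Real.sqrt (((p.1 - q.1 : ℤ) : ℝ) ^ 2) := (Real.sqrt_sq_eq_abs _).symm
    _ ≤ _ := Real.sqrt_le_sqrt (by nlinarith [sq_nonneg (((p.2 - q.2 : ℤ) : ℝ))])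

lemma le_euclDist_snd {p q : ℤ × ℤ} {M : ℕ} (h : (M : ℤ) ≤ q.2 - p.2) :
    (M : ℝ) ≤ euclDist p q := by
  unfold euclDist
  have h1 : (M : ℝ) ≤ |((p.2 - q.2 : ℤ) : ℝ)| := by
    push_cast
    rw [abs_sub_comm]
    have : (M : ℝ) ≤ (q.2 : ℝ) - p.2 := by exact_mod_cast h
    exact this.trans (le_abs_self _)
  calc (M : ℝ) ≤ |((p.2 - q.2 : ℤ) : ℝ)| := h1
    _ = Real.sqrt (((p.2 - q.2 : ℤ) : ℝ) ^ 2) := (Real.sqrt_sq_eq_abs _).symm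
    _ ≤ _ := Real.sqrt_le_sqrt (by nlinarith [sq_nonneg (((p.1 - q.1 : ℤ) : ℝ))])

lemma exists_rect_rows (L : Finset (ℤ × ℤ)) (y0 y1 : ℤ) (h : ∀ p ∈ L, y0 ≤ p.2 ∧ p.2 ≤ y1) :
    ∃ (m : ℕ) (c1 : ℤ), ∀ p ∈ L, p ∈ Zrect m (y1 - y0 + 1).toNat (c1, y0) := by
  rcases L.eq_empty_or_nonempty with rfl | hL
  · exact ⟨0, 0, by simp⟩
  · have hne : (L.image Prod.fst).Nonempty := hL.image _
    refine ⟨((L.image Prod.fst).max' hne - (L.image Prod.fst).min' hne + 1).toNat,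
      (L.image Prod.fst).min' hne, fun p hp => ?_⟩
    have h1 := Finset.min'_le _ p.1 (Finset.mem_image_of_mem _ hp)
    have h2 := Finset.le_max' _ p.1 (Finset.mem_image_of_mem _ hp)
    have h3 := h p hp
    rw [mem_Zrect]
    refine ⟨h1, by omega, by omega, by omega⟩

lemma exists_rect_cols (L : Finset (ℤ × ℤ)) (x0 x1 : ℤ) (h : ∀ p ∈ L, x0 ≤ p.1 ∧ p.1 ≤ x1) :
    ∃ (n : ℕ) (c2 : ℤ), ∀ p ∈ L, p ∈ Zrect (x1 - x0 + 1).toNat n (x0, c2) := by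
  rcases L.eq_empty_or_nonempty with rfl | hL
  · exact ⟨0, 0, by simp⟩
  · have hne : (L.image Prod.snd).Nonempty := hL.image _
    refine ⟨((L.image Prod.snd).max' hne - (L.image Prod.snd).min' hne + 1).toNat,
      (L.image Prod.snd).min' hne, fun p hp => ?_⟩
    have h1 := Finset.min'_le _ p.2 (Finset.mem_image_of_mem _ hp)
    have h2 := Finset.le_max' _ p.2 (Finset.mem_image_of_mem _ hp)
    have h3 := h p hp
    rw [mem_Zrect]
    refine ⟨by omega, by omega, h1, by omega⟩

lemma ncard_prod' {α β : Type*} (s : Set α) (t : Set β) :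
    (s ×ˢ t).ncard = s.ncard * t.ncard := by
  rw [← Nat.card_coe_set_eq, ← Nat.card_coe_set_eq, ← Nat.card_coe_set_eq,
    Nat.card_congr (Equiv.Set.prod s t), Nat.card_prod]

lemma patternCount_glue {A : Type*} [Fintype A] {U : Set ((ℤ × ℤ) → A)} {M : ℕ}
    (hbg : BlockGluingWithGap U M)
    {m1 n1 m2 n2 : ℕ} {c1 c2 : ℤ × ℤ}
    (hsep : ∀ p ∈ Zrect m1 n1 c1, ∀ q ∈ Zrect m2 n2 c2, (M : ℝ) ≤ euclDist p q)
    {L1 L2 : Finset (ℤ × ℤ)} (h1 : ∀ p ∈ L1, p ∈ Zrect m1 n1 c1)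
    (h2 : ∀ p ∈ L2, p ∈ Zrect m2 n2 c2) :
    patternCount U L1 * patternCount U L2 ≤ patternCount U (L1 ∪ L2) := by
  classical
  set g : (↥(L1 ∪ L2) → A) → (↥L1 → A) × (↥L2 → A) :=
    fun f => (fun p => f ⟨(p : ℤ × ℤ), Finset.mem_union_left _ p.2⟩,
              fun p => f ⟨(p : ℤ × ℤ), Finset.mem_union_right _ p.2⟩) with hg
  have hsub : patternSet U L1 ×ˢ patternSet U L2 ⊆ g '' patternSet U (L1 ∪ L2) := by
    rintro ⟨u1, u2⟩ ⟨⟨y, hy, rfl⟩, ⟨z, hz, rfl⟩⟩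
    obtain ⟨x, hx, hx1, hx2⟩ := hbg m1 n1 m2 n2 c1 c2 hsep y hy z hz
    refine ⟨_, ⟨x, hx, rfl⟩, ?_⟩
    simp only [hg, Prod.mk.injEq]
    constructor <;> funext p
    · exact hx1 p (h1 p p.2)
    · exact hx2 p (h2 p p.2)
  calc patternCount U L1 * patternCount U L2
      = (patternSet U L1 ×ˢ patternSet U L2).ncard := (ncard_prod' _ _).symm
    _ ≤ (g '' patternSet U (L1 ∪ L2)).ncard := Set.ncard_le_ncard hsub (Set.toFinite _)
    _ ≤ (patternSet U (L1 ∪ L2)).ncard := Set.ncard_image_le (Set.toFinite _)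
    _ = patternCount U (L1 ∪ L2) := rfl

lemma level1 {A : Type*} [Fintype A] {U : Set ((ℤ × ℤ) → A)} (hUne : U.Nonempty)
    (hσ : ∀ v : ℤ × ℤ, ∀ x ∈ U, (fun p => x (p + v)) ∈ U)
    {M : ℕ} (hbg : BlockGluingWithGap U M)
    {k l : ℕ} (hk : M + 1 ≤ k) (hl : M + 1 ≤ l) (b : ℤ) (S : Finset ℤ) :
    patternCount U (Zrect (k - M) (l - M) (0, 0)) ^ S.card ≤
      patternCount U (S.biUnion (fun a => Zrect (k - M) (l - M) ((k : ℤ) * a, (l : ℤ) * b))) := by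
  induction S using Finset.induction_on_max with
  | empty => simpa using patternCount_pos hUne _
  | insert a S ha IH =>
    have haS : a ∉ S := fun h => lt_irrefl a (ha a h)
    rcases S.eq_empty_or_nonempty with rfl | hS
    · simp only [Finset.biUnion_insert, Finset.biUnion_empty, Finset.union_empty,
        Finset.card_insert_of_notMem (Finset.notMem_empty a), Finset.card_empty, zero_add,
        pow_one]
      exact patternCount_base_le hσ _ _ _
    · set amin := S.min' hS with hamin
      set amax := S.max' hS with hamax
      set L1 := S.biUnion (fun a' => Zrect (k - M) (l - M) ((k : ℤ) * a', (l : ℤ) * b)) with hL1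
      have hbound : ∀ p ∈ L1, (k : ℤ) * amin ≤ p.1 ∧ p.1 ≤ (k : ℤ) * amax + (k : ℤ) - M - 1 := by
        intro p hp
        rw [hL1, Finset.mem_biUnion] at hp
        obtain ⟨a', ha', hpa⟩ := hp
        rw [mem_Zrect] at hpa
        have e1 : (k : ℤ) * amin ≤ (k : ℤ) * a' :=
          mul_le_mul_of_nonneg_left (Finset.min'_le _ _ ha') (by positivity)
        have e2 : (k : ℤ) * a' ≤ (k : ℤ) * amax :=
          mul_le_mul_of_nonneg_left (Finset.le_max' _ _ ha') (by positivity)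
        simp only at hpa
        omega
      obtain ⟨n2, c2, hc⟩ := exists_rect_cols L1 ((k : ℤ) * amin)
        ((k : ℤ) * amax + (k : ℤ) - M - 1) hbound
      have hsep : ∀ p ∈ Zrect (k - M) (l - M) ((k : ℤ) * a, (l : ℤ) * b),
          ∀ q ∈ Zrect ((k : ℤ) * amax + (k : ℤ) - M - 1 - (k : ℤ) * amin + 1).toNat n2
            ((k : ℤ) * amin, c2), (M : ℝ) ≤ euclDist p q := by
        intro p hp q hq
        rw [mem_Zrect] at hp hq
        simp only at hp hq
        have e3 : (k : ℤ) * (amax + 1) ≤ (k : ℤ) * a :=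
          mul_le_mul_of_nonneg_left (by have := ha amax (S.max'_mem hS); omega) (by positivity)
        have e4 : (k : ℤ) * (amax + 1) = (k : ℤ) * amax + k := by ring
        rw [euclDist_comm]
        exact le_euclDist_fst (by omega)
      rw [Finset.card_insert_of_notMem haS, Finset.biUnion_insert, pow_succ, mul_comm]
      calc patternCount U (Zrect (k - M) (l - M) (0, 0)) *
            patternCount U (Zrect (k - M) (l - M) (0, 0)) ^ S.card
          ≤ patternCount U (Zrect (k - M) (l - M) ((k : ℤ) * a, (l : ℤ) * b)) *
              patternCount U L1 :=
            Nat.mul_le_mul (patternCount_base_le hσ _ _ _) IH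
        _ ≤ patternCount U (Zrect (k - M) (l - M) ((k : ℤ) * a, (l : ℤ) * b) ∪ L1) :=
            patternCount_glue hbg hsep (fun p hp => hp) hc

lemma level2 {A : Type*} [Fintype A] {U : Set ((ℤ × ℤ) → A)} (hUne : U.Nonempty)
    {M : ℕ} (hbg : BlockGluingWithGap U M)
    {l : ℕ} (hl : M + 1 ≤ l)
    (G : ℤ → Finset (ℤ × ℤ))
    (hG : ∀ b : ℤ, ∀ p ∈ G b, (l : ℤ) * b ≤ p.2 ∧ p.2 ≤ (l : ℤ) * b + (l : ℤ) - M - 1)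
    (T : Finset ℤ) :
    (∏ b ∈ T, patternCount U (G b)) ≤ patternCount U (T.biUnion G) := by
  induction T using Finset.induction_on_max with
  | empty => simpa using patternCount_pos hUne _
  | insert b T hb IH =>
    have hbT : b ∉ T := fun h => lt_irrefl b (hb b h)
    rcases T.eq_empty_or_nonempty with rfl | hT
    · simp
    · set bmin := T.min' hT with hbmin
      set bmax := T.max' hT with hbmax
      have hbound : ∀ p ∈ T.biUnion G,
          (l : ℤ) * bmin ≤ p.2 ∧ p.2 ≤ (l : ℤ) * bmax + (l : ℤ) - M - 1 := by
        intro p hp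
        rw [Finset.mem_biUnion] at hp
        obtain ⟨b', hb', hpb⟩ := hp
        have e1 : (l : ℤ) * bmin ≤ (l : ℤ) * b' :=
          mul_le_mul_of_nonneg_left (Finset.min'_le _ _ hb') (by positivity)
        have e2 : (l : ℤ) * b' ≤ (l : ℤ) * bmax :=
          mul_le_mul_of_nonneg_left (Finset.le_max' _ _ hb') (by positivity)
        have := hG b' p hpb
        omega
      obtain ⟨m1, c1, hc1⟩ := exists_rect_rows (T.biUnion G) ((l : ℤ) * bmin)
        ((l : ℤ) * bmax + (l : ℤ) - M - 1) hbound
      obtain ⟨m2, c2, hc2⟩ := exists_rect_rows (G b) ((l : ℤ) * b)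
        ((l : ℤ) * b + (l : ℤ) - M - 1) (hG b)
      have hsep : ∀ p ∈ Zrect m2 ((l : ℤ) * b + (l : ℤ) - M - 1 - (l : ℤ) * b + 1).toNat
            (c2, (l : ℤ) * b),
          ∀ q ∈ Zrect m1 ((l : ℤ) * bmax + (l : ℤ) - M - 1 - (l : ℤ) * bmin + 1).toNat
            (c1, (l : ℤ) * bmin), (M : ℝ) ≤ euclDist p q := by
        intro p hp q hq
        rw [mem_Zrect] at hp hq
        simp only at hp hq
        have e3 : (l : ℤ) * (bmax + 1) ≤ (l : ℤ) * b :=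
          mul_le_mul_of_nonneg_left (by have := hb bmax (T.max'_mem hT); omega) (by positivity)
        have e4 : (l : ℤ) * (bmax + 1) = (l : ℤ) * bmax + l := by ring
        rw [euclDist_comm]
        exact le_euclDist_snd (by omega)
      rw [Finset.prod_insert hbT, Finset.biUnion_insert]
      calc patternCount U (G b) * ∏ b' ∈ T, patternCount U (G b')
          ≤ patternCount U (G b) * patternCount U (T.biUnion G) :=
            Nat.mul_le_mul_left _ IH
        _ ≤ patternCount U (G b ∪ T.biUnion G) := patternCount_glue hbg hsep hc2 hc1

/-- for a block gluing shift space with gap `M` and `k,l ≥ M+1`,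
`Γ(Ω(n),U) ≥ Γ(Ω_{k,l}(n),U) ≥ (Γ_{(k−M)×(l−M)}(U))^{α_{k,l}(n)}`. -/
theorem patternCount_ge_pow_of_blockGluing {A : Type*} [Fintype A] [TopologicalSpace A]
    [DiscreteTopology A] (hcard : 2 ≤ Fintype.card A)
    (U : Set ((ℤ × ℤ) → A)) (hU : IsShiftSpace U)
    (M : ℕ) (hM : 1 ≤ M) (hbg : BlockGluingWithGap U M)
    (Ω : ℕ → Finset (ℤ × ℤ)) (hΩ : IsExpandingSystem Ω) :
    ∀ k l n : ℕ, M + 1 ≤ k → M + 1 ≤ l →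
      patternCount U (Zrect (k - M) (l - M) (0, 0)) ^ alphaKL k l (Ω n) ≤
          patternCount U (gridPart k l (Ω n)) ∧
        patternCount U (gridPart k l (Ω n)) ≤ patternCount U (Ω n) := by
  intro k l n hk hl
  obtain ⟨hUne, _, hσ⟩ := hU
  refine ⟨?_, patternCount_mono U (Finset.filter_subset _ _)⟩
  classical
  set I : Set (ℤ × ℤ) := {ab | Zrect k l ((k : ℤ) * ab.1, (l : ℤ) * ab.2) ⊆ Ω n} with hI
  have halpha : alphaKL k l (Ω n) = I.ncard := rfl
  have hIfin : I.Finite := by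
    have hinj : Set.InjOn (fun ab : ℤ × ℤ => ((k : ℤ) * ab.1, (l : ℤ) * ab.2))
        ((fun ab : ℤ × ℤ => ((k : ℤ) * ab.1, (l : ℤ) * ab.2)) ⁻¹' ↑(Ω n)) := by
      intro x _ y _ hxy
      rw [Prod.mk.injEq] at hxy
      have hk0 : (k : ℤ) ≠ 0 := by omega
      have hl0 : (l : ℤ) ≠ 0 := by omega
      exact Prod.ext (mul_left_cancel₀ hk0 hxy.1) (mul_left_cancel₀ hl0 hxy.2)
    refine ((Ω n).finite_toSet.preimage hinj).subset ?_
    intro ab hab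
    have hmem : ((k : ℤ) * ab.1, (l : ℤ) * ab.2) ∈
        Zrect k l ((k : ℤ) * ab.1, (l : ℤ) * ab.2) := by
      rw [mem_Zrect]
      refine ⟨le_refl _, by omega, le_refl _, by omega⟩
    exact hab hmem
  set J : Finset (ℤ × ℤ) := hIfin.toFinset with hJ
  set T : Finset ℤ := J.image Prod.snd with hT
  set F : ℤ → Finset ℤ := fun b => (J.filter (fun ab => ab.2 = b)).image Prod.fst with hF
  set G : ℤ → Finset (ℤ × ℤ) :=
    fun b => (F b).biUnion (fun a => Zrect (k - M) (l - M) ((k : ℤ) * a, (l : ℤ) * b)) with hG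
  have hcardJ : J.card = ∑ b ∈ T, (F b).card := by
    rw [Finset.card_eq_sum_card_fiberwise
      (fun ab hab => Finset.mem_image_of_mem Prod.snd hab : ∀ ab ∈ J, ab.2 ∈ T)]
    refine Finset.sum_congr rfl (fun b _ => ?_)
    rw [hF]
    rw [Finset.card_image_of_injOn]
    intro x hx y hy hxy
    rw [Finset.mem_coe, Finset.mem_filter] at hx hy
    exact Prod.ext hxy (hx.2.trans hy.2.symm)
  have hGbounds : ∀ b : ℤ, ∀ p ∈ G b,
      (l : ℤ) * b ≤ p.2 ∧ p.2 ≤ (l : ℤ) * b + (l : ℤ) - M - 1 := by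
    intro b p hp
    rw [hG, Finset.mem_biUnion] at hp
    obtain ⟨a, _, hpa⟩ := hp
    rw [mem_Zrect] at hpa
    simp only at hpa
    omega
  have hUnion : T.biUnion G =
      J.biUnion (fun ab => Zrect (k - M) (l - M) ((k : ℤ) * ab.1, (l : ℤ) * ab.2)) := by
    ext p
    simp only [hG, hF, hT, Finset.mem_biUnion, Finset.mem_image, Finset.mem_filter]
    constructor
    · rintro ⟨b, ⟨ab, habJ, rfl⟩, a, ⟨ab', ⟨hJ', hsnd⟩, rfl⟩, hp⟩
      exact ⟨ab', hJ', by rw [hsnd]; exact hp⟩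
    · rintro ⟨ab, habJ, hp⟩
      exact ⟨ab.2, ⟨ab, habJ, rfl⟩, ab.1, ⟨ab, ⟨habJ, rfl⟩, rfl⟩, hp⟩
  have hsubGrid : J.biUnion (fun ab => Zrect (k - M) (l - M) ((k : ℤ) * ab.1, (l : ℤ) * ab.2))
      ⊆ gridPart k l (Ω n) := by
    intro p hp
    rw [Finset.mem_biUnion] at hp
    obtain ⟨ab, habJ, hp⟩ := hp
    have habI : ab ∈ I := hIfin.mem_toFinset.mp habJ
    have hpbig : p ∈ Zrect k l ((k : ℤ) * ab.1, (l : ℤ) * ab.2) := by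
      rw [mem_Zrect] at hp ⊢
      simp only at hp ⊢
      omega
    rw [gridPart, Finset.mem_filter]
    exact ⟨habI hpbig, ab.1, ab.2, hpbig, habI⟩
  calc patternCount U (Zrect (k - M) (l - M) (0, 0)) ^ alphaKL k l (Ω n)
      = patternCount U (Zrect (k - M) (l - M) (0, 0)) ^ J.card := by
        rw [halpha, Set.ncard_eq_toFinset_card _ hIfin]
    _ = ∏ b ∈ T, patternCount U (Zrect (k - M) (l - M) (0, 0)) ^ (F b).card := by
        rw [hcardJ, Finset.prod_pow_eq_pow_sum]
    _ ≤ ∏ b ∈ T, patternCount U (G b) :=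
        Finset.prod_le_prod' (fun b _ => level1 hUne hσ hbg hk hl b (F b))
    _ ≤ patternCount U (T.biUnion G) := level2 hUne hbg hl G hGbounds T
    _ = patternCount U (J.biUnion
          (fun ab => Zrect (k - M) (l - M) ((k : ℤ) * ab.1, (l : ℤ) * ab.2))) := by
        rw [hUnion]
    _ ≤ patternCount U (gridPart k l (Ω n)) := patternCount_mono U hsubGrid
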